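/- Let f : ℝ^d → ℝ be three times continuously differentiable with Hessian L_F-Lipschitz in the Frobenius norm (‖∇²f(x) − ∇²f(y)‖_F ≤ L_F·‖x − y‖ for all x, y). Then for every x ∈ ℝ^d, the Euclidean norm of the vector Σ_{j=1}^{d} (∂²/∂x_j²) ∇f(x), i.e. the vector whose i-th coordinate is Σ_{j=1}^{d} ∂³f(x)/∂x_i∂x_j∂x_j, is at most d·L_F. -/

import Mathlib

open Real

/-- The Frobenius norm of a (continuous) linear map on `ℝ^d`. -/
noncomputable def frobNorm {d : ℕ}
    (A : EuclideanSpace ℝ (Fin d) →L[ℝ] EuclideanSpace ℝ (Fin d)) : ℝ :=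
  Real.sqrt (∑ i, ∑ j, (A (EuclideanSpace.single j 1) i) ^ 2)

lemma col_le_frobNorm {d : ℕ}
    (A : EuclideanSpace ℝ (Fin d) →L[ℝ] EuclideanSpace ℝ (Fin d)) (j : Fin d) :
    ‖A (EuclideanSpace.single j 1)‖ ≤ frobNorm A := by
  rw [EuclideanSpace.norm_eq, frobNorm]
  apply Real.sqrt_le_sqrt
  apply Finset.sum_le_sum
  intro i _
  have : ‖A (EuclideanSpace.single j 1) i‖ ^ 2 = (A (EuclideanSpace.single j 1) i) ^ 2 := by
    rw [Real.norm_eq_abs, sq_abs]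
  rw [this]
  exact Finset.single_le_sum (f := fun j' => (A (EuclideanSpace.single j' 1) i) ^ 2)
    (fun j' _ => sq_nonneg _) (Finset.mem_univ j)

/-- **Lemma (bound on `Σ_j ∂²_{x_j} ∇f`).**
If `f ∈ C³(ℝ^d)` and its Hessian is `L_F`-Lipschitz in the Frobenius norm, then the
vector `Σ_{j=1}^d (∂²/∂x_j²) ∇f(x)` (whose `i`-th coordinate is
`Σ_j ∂³f/∂x_i∂x_j∂x_j`) has Euclidean norm at most `d·L_F`. -/
theorem laplacian_of_gradient_bound {d : ℕ}
    (f : EuclideanSpace ℝ (Fin d) → ℝ) (L_F : ℝ)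
    (hf : ContDiff ℝ 3 f)
    (hlip : ∀ x y : EuclideanSpace ℝ (Fin d),
      frobNorm (fderiv ℝ (gradient f) x - fderiv ℝ (gradient f) y) ≤ L_F * ‖x - y‖) :
    ∀ x : EuclideanSpace ℝ (Fin d),
      ‖∑ j, (fderiv ℝ (fun y => fderiv ℝ (gradient f) y (EuclideanSpace.single j 1))
          x) (EuclideanSpace.single j 1)‖ ≤ d * L_F := by
  intro x
  rcases Nat.eq_zero_or_pos d with hd | hd
  · subst hd
    simp
  -- L_F is nonnegative
  have hL : 0 ≤ L_F := by
    have h := hlip 0 (EuclideanSpace.single ⟨0, hd⟩ 1)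
    have hnorm : ‖(0 : EuclideanSpace ℝ (Fin d)) - EuclideanSpace.single ⟨0, hd⟩ 1‖ = 1 := by
      rw [zero_sub, norm_neg, EuclideanSpace.norm_single, norm_one]
    rw [hnorm, mul_one] at h
    exact le_trans (Real.sqrt_nonneg _) h
  -- smoothness of the gradient and the Hessian
  have hgrad : ContDiff ℝ 2 (gradient f) := by
    have h1 : ContDiff ℝ 2 (fderiv ℝ f) := hf.fderiv_right (by norm_num)
    exact ((InnerProductSpace.toDual ℝ (EuclideanSpace ℝ (Fin d))).symm.contDiff).comp h1
  have hH : ContDiff ℝ 1 (fderiv ℝ (gradient f)) := hgrad.fderiv_right (by norm_num)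
  -- each map y ↦ H(y) eⱼ is Lipschitz with constant L_F
  have key : ∀ j : Fin d,
      ‖(fderiv ℝ (fun y => fderiv ℝ (gradient f) y (EuclideanSpace.single j 1)) x)
        (EuclideanSpace.single j 1)‖ ≤ L_F := by
    intro j
    set g := fun y => fderiv ℝ (gradient f) y (EuclideanSpace.single j 1) with hg
    have hgdiff : ContDiff ℝ 1 g := hH.clm_apply contDiff_const
    have hglip : LipschitzWith L_F.toNNReal g := by
      apply LipschitzWith.of_dist_le_mul
      intro a b
      rw [dist_eq_norm, dist_eq_norm]
      have : g a - g b = (fderiv ℝ (gradient f) a - fderiv ℝ (gradient f) b)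
          (EuclideanSpace.single j 1) := by simp [hg]
      rw [this]
      calc _ ≤ frobNorm (fderiv ℝ (gradient f) a - fderiv ℝ (gradient f) b) :=
            col_le_frobNorm _ j
        _ ≤ L_F * ‖a - b‖ := hlip a b
        _ = L_F.toNNReal * ‖a - b‖ := by rw [Real.coe_toNNReal _ hL]
    have hop : ‖fderiv ℝ g x‖ ≤ L_F := by
      have := ((hgdiff.differentiable one_ne_zero) x).hasFDerivAt.le_of_lipschitz hglip
      rwa [Real.coe_toNNReal _ hL] at this
    calc ‖(fderiv ℝ g x) (EuclideanSpace.single j 1)‖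
        ≤ ‖fderiv ℝ g x‖ * ‖(EuclideanSpace.single j 1 : EuclideanSpace ℝ (Fin d))‖ :=
          (fderiv ℝ g x).le_opNorm _
      _ = ‖fderiv ℝ g x‖ := by rw [EuclideanSpace.norm_single, norm_one, mul_one]
      _ ≤ L_F := hop
  calc ‖∑ j, (fderiv ℝ (fun y => fderiv ℝ (gradient f) y (EuclideanSpace.single j 1))
          x) (EuclideanSpace.single j 1)‖
      ≤ ∑ j : Fin d, ‖(fderiv ℝ (fun y => fderiv ℝ (gradient f) y (EuclideanSpace.single j 1))
          x) (EuclideanSpace.single j 1)‖ := norm_sum_le _ _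
    _ ≤ ∑ _j : Fin d, L_F := Finset.sum_le_sum fun j _ => key j
    _ = d * L_F := by rw [Finset.sum_const, Finset.card_univ, Fintype.card_fin, nsmul_eq_mul]
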